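/- Let a, b, c, η_max be positive real numbers and set η = min{ √(a/b), (a/c)^{1/3}, η_max }. Then a/η + b·η + c·η² ≤ a/η_max + 2√(a·b) + 2·(a²·c)^{1/3}. -/

import Mathlib

/-- Step-size tuning inequality: with
`η = min { √(a/b), (a/c)^{1/3}, η_max }`, one has
`a/η + b·η + c·η² ≤ a/η_max + 2√(a·b) + 2(a²·c)^{1/3}`. -/
theorem stepsize_tuning (a b c ηmax η : ℝ)
    (ha : 0 < a) (hb : 0 < b) (hc : 0 < c) (hmax : 0 < ηmax)
    (hη : η = min (min (Real.sqrt (a / b)) ((a / c) ^ ((1 : ℝ) / 3))) ηmax) :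
    a / η + b * η + c * η ^ 2
      ≤ a / ηmax + 2 * Real.sqrt (a * b) + 2 * (a ^ 2 * c) ^ ((1 : ℝ) / 3) := by
  set s := Real.sqrt (a / b) with hs_def
  set t := (a / c) ^ ((1 : ℝ) / 3) with ht_def
  have hs : 0 < s := Real.sqrt_pos.2 (div_pos ha hb)
  have ht : 0 < t := Real.rpow_pos_of_pos (div_pos ha hc) _
  have hη0 : 0 < η := by rw [hη]; exact lt_min (lt_min hs ht) hmax
  -- identity: a / s = √(a b)
  have hsq : Real.sqrt (a * b) * s = a := by
    rw [hs_def, ← Real.sqrt_mul (by positivity)]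
    have : a * b * (a / b) = a ^ 2 := by field_simp
    rw [this, Real.sqrt_sq ha.le]
  have hsab : a / s = Real.sqrt (a * b) := by
    rw [div_eq_iff hs.ne']; exact hsq.symm
  -- identity: b * s = √(a b)
  have hbs : b * s = Real.sqrt (a * b) := by
    rw [hs_def, ← Real.sqrt_sq hb.le, ← Real.sqrt_mul (by positivity)]
    congr 1
    field_simp; ring_nf; rw [Real.sq_sqrt (by positivity)]
  -- identity: a / t = (a² c)^{1/3}
  have htq : (a ^ 2 * c) ^ ((1 : ℝ) / 3) * t = a := by
    rw [ht_def, ← Real.mul_rpow (by positivity) (by positivity)]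
    have : a ^ 2 * c * (a / c) = a ^ 3 := by field_simp
    rw [this, ← Real.rpow_natCast a 3, ← Real.rpow_mul ha.le]
    norm_num
  have htab : a / t = (a ^ 2 * c) ^ ((1 : ℝ) / 3) := by
    rw [div_eq_iff ht.ne']; exact htq.symm
  -- cube of t
  have ht3 : t ^ 3 = a / c := by
    rw [ht_def, ← Real.rpow_natCast ((a / c) ^ ((1:ℝ)/3)) 3, ← Real.rpow_mul (by positivity)]
    norm_num
  -- identity: c * t ^ 2 = (a² c)^{1/3}
  have hct : c * t ^ 2 = (a ^ 2 * c) ^ ((1 : ℝ) / 3) := by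
    rw [← htab, eq_div_iff ht.ne']
    have : c * t ^ 2 * t = c * t ^ 3 := by ring
    rw [this, ht3]
    field_simp
  have hηs : η ≤ s := hη ▸ le_trans (min_le_left _ _) (min_le_left _ _)
  have hηt : η ≤ t := hη ▸ le_trans (min_le_left _ _) (min_le_right _ _)
  have h1 : b * η ≤ Real.sqrt (a * b) := by
    rw [← hbs]; exact mul_le_mul_of_nonneg_left hηs hb.le
  have h2 : c * η ^ 2 ≤ (a ^ 2 * c) ^ ((1 : ℝ) / 3) := by
    rw [← hct]
    have : η ^ 2 ≤ t ^ 2 := by nlinarith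
    exact mul_le_mul_of_nonneg_left this hc.le
  have h3 : a / η ≤ a / s + a / t + a / ηmax := by
    have ps : 0 < a / s := div_pos ha hs
    have pt : 0 < a / t := div_pos ha ht
    have pm : 0 < a / ηmax := div_pos ha hmax
    have hcase : η = s ∨ η = t ∨ η = ηmax := by
      rw [hη]
      rcases le_total (min s t) ηmax with h | h
      · rw [min_eq_left h]
        rcases le_total s t with h2 | h2
        · left; rw [min_eq_left h2]
        · right; left; rw [min_eq_right h2]
      · right; right; rw [min_eq_right h]
    rcases hcase with h | h | h <;> rw [h] <;> linarith
  rw [hsab, htab] at h3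
  linarith
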